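/- Let p be an odd prime and n ≥ 1. In the ring Λ = Z_p[[T]]⟨T^{p^{n-1}}/p⟩ (the p-adic completion of Z_p[[T]][T^{p^{n-1}}/p]), the element log(1+T) = ∑_{k≥1} (-1)^{k+1} T^k/k lies in p^{-n+2}·Λ, i.e. p^{n-2}·log(1+T) ∈ Λ. -/

import Mathlib

open Filter

/-- The formal logarithm `log(1+T) = ∑_{k ≥ 1} (-1)^{k+1} T^k / k` in `ℚ_p[[T]]`. -/
noncomputable def logOnePlusT (p : ℕ) [Fact p.Prime] : PowerSeries ℚ_[p] :=
  PowerSeries.mk fun k => if k = 0 then 0 else (-1) ^ (k + 1) / (k : ℚ_[p])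

/-- Membership in `p^s·Λ` where `Λ = ℤ_p[[T]]⟨T^{p^{n-1}}/p⟩` is the `p`-adic completion of
`ℤ_p[[T]][T^{p^{n-1}}/p]`, described inside `ℚ_p[[T]]` coefficientwise: a series
`∑ a_k T^k` lies in `p^s·Λ` iff `‖a_k‖ ≤ p^{-s}·p^{⌊k/p^{n-1}⌋}` for all `k` and
`‖a_k‖/p^{⌊k/p^{n-1}⌋} → 0`. -/
def MemLambda (p n : ℕ) [Fact p.Prime] (s : ℝ) (f : PowerSeries ℚ_[p]) : Prop :=
  (∀ k : ℕ, ‖PowerSeries.coeff (R := ℚ_[p]) k f‖ ≤ (p : ℝ) ^ (-s) * (p : ℝ) ^ (k / p ^ (n - 1))) ∧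
    Tendsto (fun k : ℕ => ‖PowerSeries.coeff (R := ℚ_[p]) k f‖ / (p : ℝ) ^ (k / p ^ (n - 1)))
      atTop (nhds 0)

-- arithmetic key lemma
lemma key_arith (p n : ℕ) (hp : 1 < p) (hn : 1 ≤ n) (k : ℕ) (hk : k ≠ 0) :
    (padicValNat p k : ℤ) + 2 - n ≤ (k / p ^ (n - 1) : ℕ) := by
  set v := padicValNat p k with hv
  by_cases h : (v : ℤ) + 2 - n ≤ 0
  · exact h.trans (by positivity)
  · push_neg at h
    have hvn : n - 1 ≤ v := by omega
    have hpv : p ^ v ≤ k := Nat.le_of_dvd (Nat.pos_of_ne_zero hk)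
      (pow_padicValNat_dvd)
    have h1 : p ^ v / p ^ (n - 1) ≤ k / p ^ (n - 1) := Nat.div_le_div_right hpv
    have h2 : p ^ v / p ^ (n - 1) = p ^ (v - (n - 1)) :=
      Nat.pow_div hvn (by omega)
    have h3 : v - (n - 1) < p ^ (v - (n - 1)) := Nat.lt_pow_self hp
    have h4 : v - (n - 1) + 1 ≤ k / p ^ (n - 1) := by omega
    omega

/-- For an odd prime `p` and `n ≥ 1`, the element `log(1+T)` lies in `p^{-n+2}·Λ`, i.e.
`p^{n-2}·log(1+T) ∈ Λ` where `Λ = ℤ_p[[T]]⟨T^{p^{n-1}}/p⟩`. -/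
theorem pow_mul_logOnePlus_mem_Lambda (p n : ℕ) [Fact p.Prime] (hodd : p ≠ 2) (hn : 1 ≤ n) :
    MemLambda p n 0
      (PowerSeries.C (R := ℚ_[p]) ((p : ℚ_[p]) ^ ((n : ℤ) - 2)) * logOnePlusT p) := by
  have hp : p.Prime := Fact.out
  have hp1 : 1 < p := hp.one_lt
  have hpR : (1:ℝ) < p := by exact_mod_cast hp1
  have hpR0 : (0:ℝ) < p := by positivity
  set m := p ^ (n - 1) with hm
  have hm0 : 0 < m := Nat.pow_pos hp.pos
  -- coefficient norm formula
  have hcoeff : ∀ k : ℕ, k ≠ 0 →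
      ‖PowerSeries.coeff (R := ℚ_[p]) k
        (PowerSeries.C (R := ℚ_[p]) ((p : ℚ_[p]) ^ ((n : ℤ) - 2)) * logOnePlusT p)‖
      = (p:ℝ) ^ ((2:ℤ) - n + padicValNat p k) := by
    intro k hk
    rw [PowerSeries.coeff_C_mul, logOnePlusT, PowerSeries.coeff_mk, if_neg hk]
    have hkQ : ((k:ℚ_[p])) ≠ 0 := Nat.cast_ne_zero.2 hk
    rw [norm_mul, norm_div, norm_pow, norm_neg, norm_one, one_pow, one_div,
      Padic.norm_p_zpow, Padic.norm_eq_zpow_neg_valuation hkQ, Padic.valuation_natCast,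
      ← zpow_neg, ← zpow_add₀ (ne_of_gt hpR0)]
    ring_nf
  have hzero : ‖PowerSeries.coeff (R := ℚ_[p]) 0
        (PowerSeries.C (R := ℚ_[p]) ((p : ℚ_[p]) ^ ((n : ℤ) - 2)) * logOnePlusT p)‖ = 0 := by
    rw [PowerSeries.coeff_C_mul, logOnePlusT, PowerSeries.coeff_mk, if_pos rfl, mul_zero,
      norm_zero]
  constructor
  · intro k
    rw [neg_zero, Real.rpow_zero, one_mul]
    rcases eq_or_ne k 0 with rfl | hk
    · rw [hzero]; positivity
    · rw [hcoeff k hk]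
      have harith := key_arith p n hp1 hn k hk
      rw [show p ^ (n - 1) = m from rfl] at harith
      calc (p:ℝ) ^ ((2:ℤ) - n + padicValNat p k)
          ≤ (p:ℝ) ^ ((k / m : ℕ) : ℤ) := by
            apply zpow_le_zpow_right₀ hpR.le
            omega
        _ = (p:ℝ) ^ (k / m) := zpow_natCast _ _
  · -- squeeze
    set G : ℕ → ℝ := fun j => ((p:ℝ) ^ ((2:ℤ) - n) * m) * (((j:ℝ) + 1) * ((p:ℝ)⁻¹) ^ j)
      with hG
    apply squeeze_zero (g := fun k => G (k / m))
    · intro k; positivity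
    · intro k
      have hbound : ‖PowerSeries.coeff (R := ℚ_[p]) k
          (PowerSeries.C (R := ℚ_[p]) ((p : ℚ_[p]) ^ ((n : ℤ) - 2)) * logOnePlusT p)‖
          ≤ (p:ℝ) ^ ((2:ℤ) - n) * ((k / m + 1) * m : ℕ) := by
        rcases eq_or_ne k 0 with rfl | hk
        · rw [hzero]; positivity
        · rw [hcoeff k hk, zpow_add₀ (ne_of_gt hpR0)]
          have h1 : p ^ padicValNat p k ≤ k :=
            Nat.le_of_dvd (Nat.pos_of_ne_zero hk) pow_padicValNat_dvd
          have h2 : k ≤ (k / m + 1) * m := by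
            have := Nat.lt_div_mul_add (a := k) hm0
            rw [add_mul, one_mul]
            omega
          have h3 : (p:ℝ) ^ (padicValNat p k : ℤ) ≤ ((k / m + 1) * m : ℕ) := by
            rw [zpow_natCast]
            exact_mod_cast h1.trans h2
          have h4 : (0:ℝ) ≤ (p:ℝ) ^ ((2:ℤ) - n) := by positivity
          exact mul_le_mul_of_nonneg_left h3 h4
      calc ‖PowerSeries.coeff (R := ℚ_[p]) k
            (PowerSeries.C (R := ℚ_[p]) ((p : ℚ_[p]) ^ ((n : ℤ) - 2)) * logOnePlusT p)‖
            / (p:ℝ) ^ (k / m)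
          ≤ ((p:ℝ) ^ ((2:ℤ) - n) * ((k / m + 1) * m : ℕ)) / (p:ℝ) ^ (k / m) := by
            apply div_le_div_of_nonneg_right hbound (by positivity) |>.trans_eq rfl
        _ = G (k / m) := by
            rw [hG, div_eq_mul_inv, ← inv_pow]
            push_cast
            ring
    · have h1 : Tendsto (fun j : ℕ => ((j:ℝ) + 1) * ((p:ℝ)⁻¹) ^ j) atTop (nhds 0) := by
        have hr0 : (0:ℝ) ≤ (p:ℝ)⁻¹ := by positivity
        have hr1 : (p:ℝ)⁻¹ < 1 := inv_lt_one_of_one_lt₀ hpR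
        have := (tendsto_self_mul_const_pow_of_lt_one hr0 hr1).add
          (tendsto_pow_atTop_nhds_zero_of_lt_one hr0 hr1)
        simpa [add_mul] using this
      have h2 : Tendsto G atTop (nhds 0) := by
        have := h1.const_mul ((p:ℝ) ^ ((2:ℤ) - n) * m)
        simpa only [mul_zero] using this
      have h3 : Tendsto (fun k : ℕ => k / m) atTop atTop :=
        (Filter.map_div_atTop_eq_nat m hm0).le
      exact h2.comp h3
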